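/- Let f(x) = a₀x^d + C(d,1)a₁x^{d−1} + ... + C(d,d−1)a_{d−1}x + a_d over ℂ with d ≥ 3 and not all aᵢ zero. Then f(x) = (αx + β)^d for some α, β ∈ ℂ if and only if aᵢa_{i+2} = a_{i+1}² for all 0 ≤ i ≤ d−2 and the proportionality a₀ : a₁ = a₁ : a₂ = ... = a_{d−1} : a_d holds (equivalently, the (d−1)×3 Hankel matrix with rows (a_{i}, a_{i+1}, a_{i+2}), 0 ≤ i ≤ d−2, has rank at most 1). -/

import Mathlib

open Polynomial Finset

-- generic coefficient lemma
lemma st16_coeff (n : ℕ) (b : ℕ → ℂ) (m : ℕ) (hm : m ≤ n) :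
    (∑ k ∈ Finset.range (n+1), Polynomial.C (b k) * Polynomial.X ^ k).coeff m = b m := by
  rw [Polynomial.finset_sum_coeff]
  simp only [Polynomial.coeff_C_mul, Polynomial.coeff_X_pow, mul_ite, mul_one, mul_zero]
  rw [Finset.sum_ite_eq]
  simp [Nat.lt_succ_iff, hm]

-- sufficiency of the coefficient condition
lemma st16_suff (d : ℕ) (a : ℕ → ℂ) (α β : ℂ)
    (h : ∀ i ≤ d, a i = α^(d-i) * β^i) (x : ℂ) :
    ∑ i ∈ Finset.range (d+1), (d.choose i : ℂ) * a i * x^(d-i) = (α*x + β)^d := by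
  rw [add_pow, ← Finset.sum_range_reflect]
  refine Finset.sum_congr rfl fun k hk => ?_
  have hk' : k ≤ d := Nat.lt_succ_iff.mp (Finset.mem_range.mp hk)
  have e1 : d + 1 - 1 - k = d - k := by omega
  rw [e1, h (d-k) (Nat.sub_le d k), Nat.sub_sub_self hk', Nat.choose_symm hk', mul_pow]
  ring

-- necessity: extract coefficients
lemma st16_nec (d : ℕ) (hd : 1 ≤ d) (a : ℕ → ℂ) (α β : ℂ)
    (h : ∀ x : ℂ, ∑ i ∈ Finset.range (d+1), (d.choose i : ℂ) * a i * x^(d-i) = (α*x + β)^d) :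
    ∀ i ≤ d, a i = α^(d-i) * β^i := by
  set q : ℂ[X] := ∑ k ∈ Finset.range (d+1),
      Polynomial.C (α^k * β^(d-k) * (d.choose k : ℂ)) * Polynomial.X ^ k with hq
  set p : ℂ[X] := ∑ k ∈ Finset.range (d+1),
      Polynomial.C ((d.choose (d-k) : ℂ) * a (d-k)) * Polynomial.X ^ k with hp
  have hpq : p = q := by
    apply Polynomial.funext
    intro x
    have hpe : p.eval x = ∑ i ∈ Finset.range (d+1), (d.choose i : ℂ) * a i * x^(d-i) := by
      rw [hp, Polynomial.eval_finset_sum, ← Finset.sum_range_reflect]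
      refine Finset.sum_congr rfl fun k hk => ?_
      have hk' : k ≤ d := Nat.lt_succ_iff.mp (Finset.mem_range.mp hk)
      have e1 : d + 1 - 1 - k = d - k := by omega
      simp [e1, Nat.sub_sub_self hk']
    have hqe : q.eval x = (α*x + β)^d := by
      rw [hq, Polynomial.eval_finset_sum, add_pow]
      refine Finset.sum_congr rfl fun k hk => ?_
      simp only [Polynomial.eval_mul, Polynomial.eval_pow, Polynomial.eval_C, Polynomial.eval_X]
      rw [mul_pow]; ring
    rw [hpe, hqe, h x]
  intro i hi
  have h1 : p.coeff (d - i) = (d.choose i : ℂ) * a i := by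
    rw [hp, st16_coeff _ _ _ (Nat.sub_le d i), Nat.sub_sub_self hi]
  have h2 : q.coeff (d - i) = α^(d-i) * β^i * (d.choose i : ℂ) := by
    rw [hq, st16_coeff _ _ _ (Nat.sub_le d i), Nat.sub_sub_self hi, Nat.choose_symm hi]
  have h3 : (d.choose i : ℂ) * a i = α^(d-i) * β^i * (d.choose i : ℂ) := by
    rw [← h1, ← h2, hpq]
  have hc : (d.choose i : ℂ) ≠ 0 := by
    exact_mod_cast (Nat.choose_pos hi).ne'
  have h3' : (d.choose i : ℂ) * a i = (d.choose i : ℂ) * (α^(d-i) * β^i) := by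
    rw [h3]; ring
  exact mul_left_cancel₀ hc h3'

theorem stmt16 (d : ℕ) (hd : 3 ≤ d) (a : ℕ → ℂ)
    (hne : ¬ ∀ i ≤ d, a i = 0) :
    (∃ α β : ℂ, ∀ x : ℂ,
        ∑ i ∈ Finset.range (d+1), (d.choose i : ℂ) * a i * x^(d-i) = (α*x + β)^d) ↔
      (Matrix.of fun (i : Fin (d-1)) (j : Fin 3) => a ((i : ℕ) + (j : ℕ))).rank ≤ 1 := by
  constructor
  · rintro ⟨α, β, h⟩
    have hcoef := st16_nec d (by omega) a α β h
    set u : Matrix (Fin (d-1)) (Fin 1) ℂ :=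
      Matrix.of fun (i : Fin (d-1)) (_ : Fin 1) => α^(d-2-(i:ℕ)) * β^(i:ℕ) with hu
    set v : Matrix (Fin 1) (Fin 3) ℂ :=
      Matrix.of fun (_ : Fin 1) (j : Fin 3) => α^(2-(j:ℕ)) * β^(j:ℕ) with hv
    have heq : (Matrix.of fun (i : Fin (d-1)) (j : Fin 3) => a ((i : ℕ) + (j : ℕ))) = u * v := by
      ext i j
      rw [Matrix.mul_apply]
      have hij : (i:ℕ) + (j:ℕ) ≤ d := by
        have h1 := i.isLt; have h2 := j.isLt; omega
      rw [Fin.sum_univ_one]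
      simp only [hu, hv, Matrix.of_apply]
      rw [hcoef _ hij, show d - ((i:ℕ)+(j:ℕ)) = (d-2-(i:ℕ)) + (2-(j:ℕ)) by
        have h1 := i.isLt; have h2 := j.isLt; omega, pow_add,
        show (i:ℕ) + (j:ℕ) = (i:ℕ) + (j:ℕ) from rfl, pow_add]
      ring
    rw [heq]
    refine le_trans (Matrix.rank_mul_le_left u v) (le_trans (Matrix.rank_le_card_width u) ?_)
    simp
  · intro hrank
    -- extract rank-one structure
    set M : Matrix (Fin (d-1)) (Fin 3) ℂ :=
      Matrix.of fun (i : Fin (d-1)) (j : Fin 3) => a ((i : ℕ) + (j : ℕ)) with hM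
    have hspan : Module.finrank ℂ (Submodule.span ℂ (Set.range M)) ≤ 1 := by
      exact (Matrix.rank_eq_finrank_span_row M).symm.le.trans hrank
    haveI : FiniteDimensional ℂ (Submodule.span ℂ (Set.range M)) :=
      FiniteDimensional.span_of_finite ℂ (Set.finite_range M)
    have hrk : Module.rank ℂ (Submodule.span ℂ (Set.range M)) ≤ 1 := by
      rw [← Module.finrank_eq_rank]
      exact_mod_cast hspan
    obtain ⟨v₀, -, hle⟩ := (rank_submodule_le_one_iff _).mp hrk
    have hex : ∀ i : Fin (d-1), ∃ r : ℂ, r • v₀ = M i := by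
      intro i
      exact Submodule.mem_span_singleton.mp
        (hle (Submodule.subset_span (Set.mem_range_self i)))
    choose c hc using hex
    have hMij : ∀ (i j : ℕ) (hi : i < d-1) (hj : j < 3),
        a (i + j) = c ⟨i, hi⟩ * v₀ ⟨j, hj⟩ := by
      intro i j hi hj
      have := congrFun (hc ⟨i, hi⟩) ⟨j, hj⟩
      simpa [hM] using this.symm
    have P : ∀ i i' j j' : ℕ, i < d-1 → i' < d-1 → j < 3 → j' < 3 →
        a (i+j) * a (i'+j') = a (i+j') * a (i'+j) := by
      intro i i' j j' hi hi' hj hj'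
      rw [hMij i j hi hj, hMij i' j' hi' hj', hMij i j' hi hj', hMij i' j hi' hj]
      ring
    by_cases ha0 : a 0 = 0
    · -- degenerate case : a i = 0 for i < d
      have zero : ∀ i, i < d → a i = 0 := by
        intro i
        induction i with
        | zero => intro _; exact ha0
        | succ i ih =>
          intro hid
          have hai : a i = 0 := ih (by omega)
          have hsq : a (i+1) * a (i+1) = a i * a (i+2) := by
            by_cases hc2 : i + 1 < d - 1
            · have := P i (i+1) 0 1 (by omega) hc2 (by omega) (by omega)
              simpa using this.symm
            · -- i + 1 = d - 1
              have hi1 : i + 1 = d - 1 := by omega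
              have := P (d-3) (d-2) 1 2 (by omega) (by omega) (by omega) (by omega)
              rw [show d-3+1 = d-2 by omega, show d-2+2 = d by omega,
                show d-3+2 = d-1 by omega, show d-2+1 = d-1 by omega] at this
              calc a (i+1) * a (i+1) = a (d-1) * a (d-1) := by rw [show i+1 = d-1 by omega]
                _ = a (d-2) * a d := this.symm
                _ = a i * a (i+2) := by rw [show d-2 = i by omega, show d = i+2 by omega]
          rw [hai, zero_mul] at hsq
          exact (mul_self_eq_zero).mp hsq
      have had : a d ≠ 0 := by
        intro h0
        exact hne fun i hi => (Nat.lt_or_ge i d).elim (zero i) (fun h => by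
          rw [show i = d by omega]; exact h0)
      obtain ⟨β, hβ⟩ := IsAlgClosed.exists_pow_nat_eq (a d) (n := d) (by omega)
      refine ⟨0, β, st16_suff d a 0 β (fun i hi => ?_)⟩
      rcases Nat.lt_or_ge i d with h | h
      · rw [zero i h, zero_pow (by omega : d - i ≠ 0), zero_mul]
      · rw [show i = d by omega, Nat.sub_self, pow_zero, one_mul, hβ]
    · -- a 0 ≠ 0 : geometric sequence
      have key : ∀ i, i < d → a 0 * a (i+1) = a 1 * a i := by
        intro i hi
        by_cases hi' : i < d - 1
        · have := P 0 i 0 1 (by omega) hi' (by omega) (by omega)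
          simpa using this
        · have hieq : i = d - 1 := by omega
          have h1 := P 0 (d-2) 0 2 (by omega) (by omega) (by omega) (by omega)
          rw [show (0:ℕ)+0 = 0 by omega, show d-2+2 = d by omega,
            show (0:ℕ)+2 = 2 by omega, show d-2+0 = d-2 by omega] at h1
          have h2 := P 1 (d-2) 0 1 (by omega) (by omega) (by omega) (by omega)
          rw [show (1:ℕ)+0 = 1 by omega, show d-2+1 = d-1 by omega,
            show (1:ℕ)+1 = 2 by omega, show d-2+0 = d-2 by omega] at h2
          rw [hieq, show d-1+1 = d by omega, h1, h2]
      have geom : ∀ i, i ≤ d → a i = a 0 * (a 1 / a 0) ^ i := by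
        intro i
        induction i with
        | zero => intro _; simp
        | succ i ih =>
          intro hid
          have hai := ih (by omega)
          have hk := key i (by omega)
          have : a (i+1) = a 1 * a i / a 0 := by
            field_simp at hk ⊢
            linear_combination hk
          rw [this, hai, pow_succ]
          field_simp
      obtain ⟨α, hα⟩ := IsAlgClosed.exists_pow_nat_eq (a 0) (n := d) (by omega)
      refine ⟨α, α * (a 1 / a 0), st16_suff d a α _ (fun i hi => ?_)⟩
      rw [geom i hi, ← hα, mul_pow, show d = (d - i) + i by omega, pow_add]
      rw [show (d-i)+i-i = d-i by omega]
      ring
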